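/- (Wirtinger-based integral inequality) Let τ > 0 and x : [t-τ, t] → ℝ be continuous. Define X = ∫_{t-τ}^{t} x(η) dη and Z = (1/τ)∫_{t-τ}^{t} ∫_{η}^{t} x(ζ) dζ dη. Then ∫_{t-τ}^{t} x(η)^2 dη ≥ (1/τ)(X^2 + 3 (X - 2Z)^2). -/
import Mathlib

open intervalIntegral MeasureTheory

private lemma lin1 (s t c1 : ℝ) (f1 : ℝ → ℝ) :
    (∫ η in s..t, c1 * f1 η) = c1 * ∫ η in s..t, f1 η :=
  intervalIntegral.integral_const_mul _ _

private lemma lin2 (s t c1 c2 : ℝ) (f1 f2 : ℝ → ℝ) (h1 : Continuous f1) (h2 : Continuous f2) :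
    (∫ η in s..t, (c1 * f1 η + c2 * f2 η))
      = c1 * (∫ η in s..t, f1 η) + c2 * ∫ η in s..t, f2 η := by
  rw [intervalIntegral.integral_add (Continuous.intervalIntegrable (by fun_prop) _ _)
      (Continuous.intervalIntegrable (by fun_prop) _ _),
    intervalIntegral.integral_const_mul, intervalIntegral.integral_const_mul]

private lemma lin3 (s t c1 c2 c3 : ℝ) (f1 f2 f3 : ℝ → ℝ)
    (h1 : Continuous f1) (h2 : Continuous f2) (h3 : Continuous f3) :
    (∫ η in s..t, (c1 * f1 η + c2 * f2 η + c3 * f3 η))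
      = c1 * (∫ η in s..t, f1 η) + c2 * (∫ η in s..t, f2 η) + c3 * ∫ η in s..t, f3 η := by
  rw [intervalIntegral.integral_add (Continuous.intervalIntegrable (by fun_prop) _ _)
      (Continuous.intervalIntegrable (by fun_prop) _ _),
    lin2 s t c1 c2 f1 f2 h1 h2, intervalIntegral.integral_const_mul]

private lemma lin6 (s t c1 c2 c3 c4 c5 c6 : ℝ) (f1 f2 f3 f4 f5 f6 : ℝ → ℝ)
    (h1 : Continuous f1) (h2 : Continuous f2) (h3 : Continuous f3)
    (h4 : Continuous f4) (h5 : Continuous f5) (h6 : Continuous f6) :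
    (∫ η in s..t, (c1 * f1 η + c2 * f2 η + c3 * f3 η + c4 * f4 η + c5 * f5 η + c6 * f6 η))
      = c1 * (∫ η in s..t, f1 η) + c2 * (∫ η in s..t, f2 η) + c3 * (∫ η in s..t, f3 η)
        + c4 * (∫ η in s..t, f4 η) + c5 * (∫ η in s..t, f5 η) + c6 * ∫ η in s..t, f6 η := by
  rw [intervalIntegral.integral_add (Continuous.intervalIntegrable (by fun_prop) _ _)
      (Continuous.intervalIntegrable (by fun_prop) _ _),
    intervalIntegral.integral_add (Continuous.intervalIntegrable (by fun_prop) _ _)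
      (Continuous.intervalIntegrable (by fun_prop) _ _),
    intervalIntegral.integral_add (Continuous.intervalIntegrable (by fun_prop) _ _)
      (Continuous.intervalIntegrable (by fun_prop) _ _),
    lin3 s t c1 c2 c3 f1 f2 f3 h1 h2 h3,
    intervalIntegral.integral_const_mul, intervalIntegral.integral_const_mul,
    intervalIntegral.integral_const_mul]

private lemma aux_bessel (s t : ℝ) (h : s < t) (y : ℝ → ℝ) (hy : Continuous y) :
    (1 / (t - s)) * ((∫ η in s..t, y η) ^ 2
        + 3 * ((∫ η in s..t, y η)
            - 2 * ((1 / (t - s)) * ∫ η in s..t, ∫ ζ in η..t, y ζ)) ^ 2) ≤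
      ∫ η in s..t, (y η) ^ 2 := by
  set τ := t - s with hτdef
  have hτ : 0 < τ := sub_pos.2 h
  set I0 : ℝ := ∫ η in s..t, y η with hI0
  set I1 : ℝ := ∫ η in s..t, (η - s) * y η with hI1
  set Iid : ℝ := ∫ η in s..t, η * y η with hIid
  have hI1' : I1 = Iid - s * I0 := by
    rw [hI1, show (fun η => (η - s) * y η) = fun η => 1 * (η * y η) + (-s) * y η by
      funext η; ring, lin2 s t 1 (-s) (fun η => η * y η) y (by fun_prop) hy]
    rw [← hIid, ← hI0]; ring
  -- Step 1: double integral equals I1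
  have hD : (∫ η in s..t, ∫ ζ in η..t, y ζ) = I1 := by
    have hu : ∀ η ∈ Set.uIcc s t, HasDerivAt (fun u => ∫ ζ in u..t, y ζ) (-(y η)) η := by
      intro η _
      exact integral_hasDerivAt_left (hy.intervalIntegrable _ _)
        (hy.stronglyMeasurableAtFilter _ _) hy.continuousAt
    have hv : ∀ η ∈ Set.uIcc s t, HasDerivAt (fun u : ℝ => u) 1 η := fun η _ => hasDerivAt_id η
    have key := integral_mul_deriv_eq_deriv_mul hu hv
      ((hy.neg).intervalIntegrable s t) (continuous_const.intervalIntegrable s t)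
    simp only [mul_one, intervalIntegral.integral_same, zero_mul] at key
    have h2 : (∫ η in s..t, -(y η) * η) = (-1) * Iid := by
      rw [show (fun η => -(y η) * η) = fun η => (-1) * (η * y η) by funext η; ring,
        lin1 s t (-1) (fun η => η * y η), ← hIid]
    rw [key, h2, hI1', ← hI0]; ring
  set b : ℝ := 12 * (I1 - τ * I0 / 2) / τ ^ 3 with hb
  set a : ℝ := I0 / τ with ha
  -- moments of ψ η = η - s - τ/2
  have hψ1 : (∫ η in s..t, (η - s - τ / 2)) = 0 := by
    rw [show (fun η : ℝ => η - s - τ / 2) = fun η : ℝ => 1 * η + (-(s + τ / 2)) * 1 by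
      funext η; ring, lin2 s t 1 (-(s + τ / 2)) (fun η => η) (fun _ => 1) continuous_id
      continuous_const]
    have hone : (∫ η in s..t, (1:ℝ)) = t - s := by simp
    rw [integral_id, hone, hτdef]; ring
  have hψ2 : (∫ η in s..t, (η - s - τ / 2) ^ 2) = τ ^ 3 / 12 := by
    rw [show (fun η : ℝ => (η - s - τ / 2) ^ 2)
        = fun η : ℝ => 1 * η ^ 2 + (-(2 * (s + τ / 2))) * η + ((s + τ / 2) ^ 2) * 1 by
      funext η; ring, lin3 s t _ _ _ (fun η => η ^ 2) (fun η => η) (fun _ => 1)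
      (by fun_prop) continuous_id continuous_const]
    have hone : (∫ η in s..t, (1:ℝ)) = t - s := by simp
    rw [integral_pow, integral_id, hone, hτdef]
    push_cast; ring
  have hM : (∫ η in s..t, (η - s - τ / 2) * y η) = I1 - τ / 2 * I0 := by
    rw [show (fun η => (η - s - τ / 2) * y η)
        = fun η => 1 * ((η - s) * y η) + (-(τ / 2)) * y η by funext η; ring,
      lin2 s t 1 (-(τ / 2)) (fun η => (η - s) * y η) y (by fun_prop) hy, ← hI1, ← hI0]
    ring
  have hnonneg : 0 ≤ ∫ η in s..t, (y η - a - b * (η - s - τ / 2)) ^ 2 := by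
    apply intervalIntegral.integral_nonneg h.le
    intro u _; positivity
  have hexpand : (∫ η in s..t, (y η - a - b * (η - s - τ / 2)) ^ 2)
      = (∫ η in s..t, (y η) ^ 2) - 2 * a * I0 - 2 * b * (I1 - τ / 2 * I0)
        + (a ^ 2 * τ + b ^ 2 * (τ ^ 3 / 12)) := by
    rw [show (fun η => (y η - a - b * (η - s - τ / 2)) ^ 2)
        = fun η => 1 * (y η ^ 2) + (-(2 * a)) * y η + (-(2 * b)) * ((η - s - τ / 2) * y η)
          + a ^ 2 * 1 + (2 * a * b) * (η - s - τ / 2) + b ^ 2 * ((η - s - τ / 2) ^ 2) by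
      funext η; ring,
      lin6 s t _ _ _ _ _ _ (fun η => y η ^ 2) y (fun η => (η - s - τ / 2) * y η) (fun _ => 1)
        (fun η => η - s - τ / 2) (fun η => (η - s - τ / 2) ^ 2)
        (by fun_prop) hy (by fun_prop) continuous_const (by fun_prop) (by fun_prop)]
    have hone : (∫ η in s..t, (1:ℝ)) = t - s := by simp
    rw [hM, hψ1, hψ2, hone, ← hI0, hτdef]
    ring
  rw [hexpand] at hnonneg
  rw [hD]
  have hkey : (1 / τ) * (I0 ^ 2 + 3 * (I0 - 2 * (1 / τ * I1)) ^ 2)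
      = 2 * a * I0 + 2 * b * (I1 - τ / 2 * I0) - (a ^ 2 * τ + b ^ 2 * (τ ^ 3 / 12)) := by
    rw [ha, hb]
    field_simp
    ring
  rw [hkey]
  linarith

theorem wirtinger_integral_inequality (t τ : ℝ) (hτ : 0 < τ) (x : ℝ → ℝ)
    (hx : ContinuousOn x (Set.Icc (t - τ) t)) :
    (1 / τ) * ((∫ η in (t - τ)..t, x η) ^ 2
        + 3 * ((∫ η in (t - τ)..t, x η)
            - 2 * ((1 / τ) * ∫ η in (t - τ)..t, ∫ ζ in η..t, x ζ)) ^ 2) ≤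
      ∫ η in (t - τ)..t, (x η) ^ 2 := by
  set s := t - τ with hs
  have hst : s < t := by rw [hs]; linarith
  -- continuous extension of x by clamping
  set y : ℝ → ℝ := fun η => x (max s (min η t)) with hy
  have hmem : ∀ η : ℝ, max s (min η t) ∈ Set.Icc s t := by
    intro η
    constructor
    · exact le_max_left _ _
    · exact max_le hst.le (min_le_right _ _)
  have hyc : Continuous y :=
    hx.comp_continuous (continuous_const.max (continuous_id.min continuous_const)) hmem
  have hyx : ∀ η ∈ Set.Icc s t, y η = x η := by
    intro η hη
    show x (max s (min η t)) = x η
    rw [min_eq_left hη.2, max_eq_right hη.1]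
  have e1 : (∫ η in s..t, x η) = ∫ η in s..t, y η := by
    apply intervalIntegral.integral_congr
    intro η hη
    rw [Set.uIcc_of_le hst.le] at hη
    exact (hyx η hη).symm
  have e2 : (∫ η in s..t, (x η) ^ 2) = ∫ η in s..t, (y η) ^ 2 := by
    apply intervalIntegral.integral_congr
    intro η hη
    rw [Set.uIcc_of_le hst.le] at hη
    show (x η) ^ 2 = (y η) ^ 2
    rw [hyx η hη]
  have e3 : (∫ η in s..t, ∫ ζ in η..t, x ζ) = ∫ η in s..t, ∫ ζ in η..t, y ζ := by
    apply intervalIntegral.integral_congr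
    intro η hη
    rw [Set.uIcc_of_le hst.le] at hη
    apply intervalIntegral.integral_congr
    intro ζ hζ
    rw [Set.uIcc_of_le hη.2] at hζ
    exact (hyx ζ ⟨le_trans hη.1 hζ.1, hζ.2⟩).symm
  rw [e1, e2, e3]
  have := aux_bessel s t hst y hyc
  rw [show t - s = τ by rw [hs]; ring] at this
  exact this
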